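/- Let g : [0,1] → ℝ be differentiable, strictly increasing (with derivative g' ≥ 0 on [0,1]) and concave, and let p_g be a g-optimal distribution. Then for all indices i < j, the first-order optimality condition holds: p_data(i) · g'(p_g(i)) ≥ p_data(j) · g'(p_g(j)). -/

import Mathlib

/-- The data distribution on ℕ: strictly decreasing, positive, and summing to 1. -/
def IsDataDist (p : ℕ → ℝ) : Prop :=
  (∀ i j : ℕ, i < j → p i > p j) ∧ (∀ i, p i > 0) ∧ (∑' i, p i = 1)

/-- A distribution on ℕ: nonnegative and summing to 1. -/
def IsDist (q : ℕ → ℝ) : Prop :=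
  (∀ i, 0 ≤ q i) ∧ (∑' i, q i = 1)

/-- The loss of distribution `q` under criterion `f`, w.r.t. data distribution `pdata`. -/
noncomputable def lossF (pdata : ℕ → ℝ) (f : ℝ → ℝ) (q : ℕ → ℝ) : ℝ :=
  -∑' i, pdata i * f (q i)

/-- `p` is `f`-optimal: it is a distribution minimizing the loss over all distributions. -/
def IsOptimal (pdata : ℕ → ℝ) (f : ℝ → ℝ) (p : ℕ → ℝ) : Prop :=
  IsDist p ∧ ∀ q : ℕ → ℝ, IsDist q → lossF pdata f p ≤ lossF pdata f q

/-- Inequality (13) of the paper (key auxiliary claim in the proof of Theorem 3):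
first-order optimality condition for a `g`-optimal distribution, where `g'` denotes
the derivative of `g` on `[0,1]`. -/
theorem optimal_first_order_condition
    (pdata : ℕ → ℝ) (hdata : IsDataDist pdata)
    (g g' : ℝ → ℝ)
    (hgderiv : ∀ x ∈ Set.Icc (0 : ℝ) 1, HasDerivWithinAt g (g' x) (Set.Icc (0 : ℝ) 1) x)
    (hg'nonneg : ∀ x ∈ Set.Icc (0 : ℝ) 1, 0 ≤ g' x)
    (hgmono : StrictMonoOn g (Set.Icc (0 : ℝ) 1))
    (hgconc : ConcaveOn ℝ (Set.Icc (0 : ℝ) 1) g)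
    (pg : ℕ → ℝ) (hpg : IsOptimal pdata g pg) :
    ∀ i j : ℕ, i < j → pdata i * g' (pg i) ≥ pdata j * g' (pg j) := by
  obtain ⟨⟨hpnn, hpsum⟩, hoptim⟩ := hpg
  obtain ⟨hdec, hpos, hdsum⟩ := hdata
  -- summability facts
  have hpgsummable : Summable pg := by
    by_contra h
    rw [tsum_eq_zero_of_not_summable h] at hpsum
    norm_num at hpsum
  have hdsummable : Summable pdata := by
    by_contra h
    rw [tsum_eq_zero_of_not_summable h] at hdsum
    norm_num at hdsum
  have hpgmem : ∀ k, pg k ∈ Set.Icc (0 : ℝ) 1 := by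
    intro k
    refine ⟨hpnn k, ?_⟩
    rw [← hpsum]
    exact Summable.le_tsum hpgsummable k fun m _ => hpnn m
  -- g' is antitone on [0,1]
  have hanti : AntitoneOn g' (Set.Icc (0 : ℝ) 1) := by
    have h1 : AntitoneOn (derivWithin g (Set.Icc (0 : ℝ) 1)) (Set.Icc (0 : ℝ) 1) :=
      hgconc.antitoneOn_derivWithin fun x hx => (hgderiv x hx).differentiableWithinAt
    intro x hx y hy hxy
    have hdx : derivWithin g (Set.Icc (0 : ℝ) 1) x = g' x :=
      (hgderiv x hx).derivWithin ((uniqueDiffOn_Icc one_pos) x hx)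
    have hdy : derivWithin g (Set.Icc (0 : ℝ) 1) y = g' y :=
      (hgderiv y hy).derivWithin ((uniqueDiffOn_Icc one_pos) y hy)
    rw [← hdx, ← hdy]
    exact h1 hx hy hxy
  -- base summability of the loss series at pg
  have hbase : Summable fun k => pdata k * g (pg k) := by
    have hC : ∀ k, |pdata k * g (pg k)| ≤ pdata k * max |g 0| |g 1| := by
      intro k
      rw [abs_mul, abs_of_pos (hpos k)]
      refine mul_le_mul_of_nonneg_left ?_ (hpos k).le
      have h0 : g 0 ≤ g (pg k) :=
        hgmono.monotoneOn (Set.left_mem_Icc.2 zero_le_one) (hpgmem k) (hpgmem k).1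
      have h1 : g (pg k) ≤ g 1 :=
        hgmono.monotoneOn (hpgmem k) (Set.right_mem_Icc.2 zero_le_one) (hpgmem k).2
      rw [abs_le]
      constructor
      · calc -(max |g 0| |g 1|) ≤ -|g 0| := by simp [le_max_left]
          _ ≤ g 0 := neg_abs_le _
          _ ≤ g (pg k) := h0
      · calc g (pg k) ≤ g 1 := h1
          _ ≤ |g 1| := le_abs_self _
          _ ≤ max |g 0| |g 1| := le_max_right _ _
    rw [← summable_abs_iff]
    exact Summable.of_nonneg_of_le (fun k => abs_nonneg _)
      hC (hdsummable.mul_right _)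
  intro i j hij
  have hij' : i ≠ j := hij.ne
  have hpij : pdata j < pdata i := hdec i j hij
  rcases le_or_gt (pg i) (pg j) with hle | hlt
  · -- easy case: g' (pg i) ≥ g' (pg j) and pdata i > pdata j
    have h1 : g' (pg j) ≤ g' (pg i) := hanti (hpgmem i) (hpgmem j) hle
    have h2 : 0 ≤ g' (pg j) := hg'nonneg _ (hpgmem j)
    calc pdata j * g' (pg j) ≤ pdata i * g' (pg j) :=
          mul_le_mul_of_nonneg_right hpij.le h2
      _ ≤ pdata i * g' (pg i) := mul_le_mul_of_nonneg_left h1 (hpos i).le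
  · -- perturbation case
    set a := pg i with ha
    set b := pg j with hb
    have hamem := hpgmem i
    have hbmem := hpgmem j
    have hδpos : (0 : ℝ) < (a - b) / 2 := by linarith
    set δ := (a - b) / 2 with hδ
    -- key inequality for each small ε
    have key : ∀ ε ∈ Set.Ioc (0 : ℝ) δ,
        pdata j * ((g (b + ε) - g b) / ε) ≤ pdata i * ((g a - g (a - ε)) / ε) := by
      intro ε hε
      obtain ⟨hε0, hεδ⟩ := hε
      set q : ℕ → ℝ := fun k =>
        pg k + (if k = j then ε else 0) - (if k = i then ε else 0) with hqdef
      have hqi : q i = a - ε := by simp [hqdef, hij', ha]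
      have hqj : q j = b + ε := by simp [hqdef, Ne.symm hij', hb]
      have hqo : ∀ k, k ≠ i → k ≠ j → q k = pg k := by
        intro k h1 h2; simp [hqdef, h1, h2]
      have hqdist : IsDist q := by
        constructor
        · intro k
          by_cases h1 : k = i
          · subst h1; rw [hqi]; simp only [hδ] at hεδ; linarith [hbmem.1]
          · by_cases h2 : k = j
            · subst h2; rw [hqj]; linarith [hbmem.1]
            · rw [hqo k h1 h2]; exact hpnn k
        · have hsum : HasSum q (1 + ε - ε) := by
            have h1 : HasSum pg 1 := hpsum ▸ hpgsummable.hasSum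
            exact (h1.add (hasSum_ite_eq j ε)).sub (hasSum_ite_eq i ε)
          simpa using hsum.tsum_eq
      -- compute the loss difference
      have hqsum : HasSum (fun k => pdata k * g (q k))
          ((∑' k, pdata k * g (pg k)) + pdata i * (g (a - ε) - g a)
            + pdata j * (g (b + ε) - g b)) := by
        have heq : (fun k => pdata k * g (q k)) = fun k =>
            pdata k * g (pg k) + (if k = i then pdata i * (g (a - ε) - g a) else 0)
              + (if k = j then pdata j * (g (b + ε) - g b) else 0) := by
          funext k
          by_cases h1 : k = i
          · subst h1; rw [hqi]; simp [hij', ← ha]; ring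
          · by_cases h2 : k = j
            · subst h2; rw [hqj]; simp [h1, ← hb]; ring
            · rw [hqo k h1 h2]; simp [h1, h2]
        rw [heq]
        exact (hbase.hasSum.add (hasSum_ite_eq i _)).add (hasSum_ite_eq j _)
      have hloss := hoptim q hqdist
      unfold lossF at hloss
      rw [neg_le_neg_iff, hqsum.tsum_eq] at hloss
      have hkey : pdata j * (g (b + ε) - g b) ≤ pdata i * (g a - g (a - ε)) := by
        linarith
      rw [mul_div_assoc', mul_div_assoc']
      exact div_le_div_of_nonneg_right hkey hε0.le
    -- limits of difference quotients
    have hb1 : b < 1 := lt_of_lt_of_le hlt hamem.2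
    have ha0 : 0 < a := lt_of_le_of_lt hbmem.1 hlt
    have hmapb : Filter.Tendsto (fun ε : ℝ => b + ε) (nhdsWithin 0 (Set.Ioi 0))
        (nhdsWithin b (Set.Icc 0 1 \ {b})) := by
      apply tendsto_nhdsWithin_of_tendsto_nhds_of_eventually_within
      · have : Filter.Tendsto (fun ε : ℝ => b + ε) (nhds 0) (nhds (b + 0)) :=
          (continuous_const.add continuous_id).tendsto 0
        simpa using this.mono_left nhdsWithin_le_nhds
      · filter_upwards [Ioc_mem_nhdsGT_of_mem ⟨le_refl 0, sub_pos.2 hb1⟩] with ε hε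
        refine ⟨⟨by linarith [hbmem.1, hε.1], by linarith [hε.2]⟩, ?_⟩
        simp only [Set.mem_singleton_iff]
        intro h; linarith [hε.1, h]
    have hmapa : Filter.Tendsto (fun ε : ℝ => a - ε) (nhdsWithin 0 (Set.Ioi 0))
        (nhdsWithin a (Set.Icc 0 1 \ {a})) := by
      apply tendsto_nhdsWithin_of_tendsto_nhds_of_eventually_within
      · have : Filter.Tendsto (fun ε : ℝ => a - ε) (nhds 0) (nhds (a - 0)) :=
          (continuous_const.sub continuous_id).tendsto 0
        simpa using this.mono_left nhdsWithin_le_nhds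
      · filter_upwards [Ioc_mem_nhdsGT_of_mem ⟨le_refl 0, ha0⟩] with ε hε
        refine ⟨⟨by linarith [hε.2], by linarith [hamem.2, hε.1]⟩, ?_⟩
        simp only [Set.mem_singleton_iff]
        intro h; linarith [hε.1, h]
    have htb : Filter.Tendsto (fun ε : ℝ => (g (b + ε) - g b) / ε)
        (nhdsWithin 0 (Set.Ioi 0)) (nhds (g' b)) := by
      have h1 := (hasDerivWithinAt_iff_tendsto_slope.mp (hgderiv b hbmem)).comp hmapb
      refine h1.congr fun ε => ?_
      rw [Function.comp_apply, slope_def_field, add_sub_cancel_left]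
    have hta : Filter.Tendsto (fun ε : ℝ => (g a - g (a - ε)) / ε)
        (nhdsWithin 0 (Set.Ioi 0)) (nhds (g' a)) := by
      have h1 := (hasDerivWithinAt_iff_tendsto_slope.mp (hgderiv a hamem)).comp hmapa
      refine h1.congr fun ε => ?_
      rw [Function.comp_apply, slope_def_field]
      rw [show a - ε - a = -ε by ring, div_neg, ← neg_div, neg_sub]
    refine le_of_tendsto_of_tendsto (htb.const_mul (pdata j)) (hta.const_mul (pdata i)) ?_
    filter_upwards [Ioc_mem_nhdsGT_of_mem ⟨le_refl 0, hδpos⟩] with ε hε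
    exact key ε hε
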